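/- For n ≥ 3, the dynamic chromatic number of the cycle C_{2n} equals 3 if n ≡ 0 (mod 3) and 4 otherwise. -/

import Mathlib

open Finset

open scoped Classical in
noncomputable def deg {V : Type*} [Fintype V] (G : SimpleGraph V) (v : V) : ℕ :=
  (Finset.univ.filter (fun u => G.Adj v u)).card

def IsProper {V : Type*} (G : SimpleGraph V) (c : V → ℕ) : Prop :=
  ∀ u v, G.Adj u v → c u ≠ c v

def IsDynamic {V : Type*} [Fintype V] (G : SimpleGraph V) (c : V → ℕ) : Prop :=
  IsProper G c ∧ ∀ v, 2 ≤ deg G v → ∃ a b, G.Adj v a ∧ G.Adj v b ∧ c a ≠ c b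

noncomputable def chrom {V : Type*} (G : SimpleGraph V) : ℕ :=
  sInf {n | ∃ c : V → ℕ, (∀ v, c v < n) ∧ IsProper G c}

noncomputable def dynChrom {V : Type*} [Fintype V] (G : SimpleGraph V) : ℕ :=
  sInf {n | ∃ c : V → ℕ, (∀ v, c v < n) ∧ IsDynamic G c}

def subdiv {V : Type*} (G : SimpleGraph V) : SimpleGraph (V ⊕ G.edgeSet) where
  Adj x y :=
    match x, y with
    | Sum.inl u, Sum.inr e => u ∈ (e : Sym2 V)
    | Sum.inr e, Sum.inl u => u ∈ (e : Sym2 V)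
    | _, _ => False
  symm := ⟨by rintro (u | e) (v | f) h <;> first | exact h | exact h.elim⟩
  loopless := ⟨by rintro (u | e) h <;> exact h⟩

noncomputable instance {V : Type*} [Fintype V] (G : SimpleGraph V) : Fintype G.edgeSet :=
  Fintype.ofFinite _

section Aux

variable {m : ℕ} [NeZero m]

lemma my_val_one (hm : 2 ≤ m) : ((1 : Fin m) : ℕ) = 1 := by
  rw [Fin.val_one']; exact Nat.mod_eq_of_lt (by omega)

lemma my_val_add (a b : Fin m) : ((a + b : Fin m) : ℕ) = (a.val + b.val) % m := by
  rw [Fin.add_def]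

lemma my_val_succ (hm : 2 ≤ m) (v : Fin m) :
    ((v + 1 : Fin m) : ℕ) = v.val + 1 ∨ (v.val + 1 = m ∧ ((v + 1 : Fin m) : ℕ) = 0) := by
  have h := my_val_add v 1
  rw [my_val_one hm] at h
  have hv := v.isLt
  rcases Nat.lt_or_ge (v.val + 1) m with h' | h'
  · left; rw [h, Nat.mod_eq_of_lt h']
  · right
    have : v.val + 1 = m := by omega
    exact ⟨this, by rw [h, this, Nat.mod_self]⟩

lemma adj_iff (hm : 3 ≤ m) {u v : Fin m} :
    (SimpleGraph.cycleGraph m).Adj u v ↔ u = v + 1 ∨ v = u + 1 := by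
  rw [SimpleGraph.cycleGraph_adj']
  have h1 : ((1 : Fin m) : ℕ) = 1 := my_val_one (by omega)
  constructor
  · rintro (h | h)
    · left
      have hs : u - v = 1 := Fin.ext (by rw [h1]; exact h)
      have := sub_eq_iff_eq_add.mp hs
      rw [this, add_comm]
    · right
      have hs : v - u = 1 := Fin.ext (by rw [h1]; exact h)
      have := sub_eq_iff_eq_add.mp hs
      rw [this, add_comm]
  · rintro (h | h)
    · left
      have : u - v = 1 := by rw [h]; abel
      rw [this, h1]
    · right
      have : v - u = 1 := by rw [h]; abel
      rw [this, h1]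

lemma two_ne_zero_fin (hm : 3 ≤ m) : (1 + 1 : Fin m) ≠ 0 := by
  intro h
  have := my_val_add (1 : Fin m) 1
  rw [h, my_val_one (by omega)] at this
  simp only [Fin.val_zero] at this
  rw [Nat.mod_eq_of_lt (by omega)] at this
  omega

lemma triple (hm : 6 ≤ m) {c : Fin m → ℕ}
    (hd : IsDynamic (SimpleGraph.cycleGraph m) c) (u : Fin m) :
    c u ≠ c (u + 1) ∧ c (u + 1) ≠ c (u + 1 + 1) ∧ c u ≠ c (u + 1 + 1) := by
  obtain ⟨hp, hdy⟩ := hd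
  have hadj1 : (SimpleGraph.cycleGraph m).Adj u (u + 1) :=
    (adj_iff (by omega)).mpr (Or.inr rfl)
  have hadj2 : (SimpleGraph.cycleGraph m).Adj (u + 1) (u + 1 + 1) :=
    (adj_iff (by omega)).mpr (Or.inr rfl)
  refine ⟨hp _ _ hadj1, hp _ _ hadj2, ?_⟩
  -- degree of u+1 is at least 2
  have hne : u ≠ u + 1 + 1 := by
    intro h
    have h' : u + 0 = u + (1 + 1) := by rw [add_zero, ← add_assoc, ← h]
    exact two_ne_zero_fin (by omega) (add_left_cancel h').symm
  have hdeg : 2 ≤ deg (SimpleGraph.cycleGraph m) (u + 1) := by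
    unfold deg
    rw [Finset.filter_congr_decidable]
    refine le_trans (le_of_eq (Finset.card_pair hne).symm)
      (Finset.card_le_card fun x hx => ?_)
    rw [Finset.mem_insert, Finset.mem_singleton] at hx
    refine Finset.mem_filter.mpr ⟨Finset.mem_univ _, ?_⟩
    rcases hx with rfl | rfl
    · exact hadj1.symm
    · exact hadj2
  obtain ⟨a, b, hva, hvb, hab⟩ := hdy (u + 1) hdeg
  have hmem : ∀ x : Fin m, (SimpleGraph.cycleGraph m).Adj (u + 1) x → x = u ∨ x = u + 1 + 1 := by
    intro x hx
    rcases (adj_iff (by omega)).mp hx with h | h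
    · left; exact (add_right_cancel h).symm
    · right; exact h
  rcases hmem a hva with rfl | rfl <;> rcases hmem b hvb with rfl | rfl
  · exact absurd rfl hab
  · exact hab
  · exact hab.symm
  · exact absurd rfl hab

lemma lb3 (hm : 6 ≤ m) {c : Fin m → ℕ} (hd : IsDynamic (SimpleGraph.cycleGraph m) c)
    {k : ℕ} (hlt : ∀ v, c v < k) : 3 ≤ k := by
  obtain ⟨h1, h2, h3⟩ := triple hm hd 0
  have := hlt 0
  have := hlt (0 + 1)
  have := hlt (0 + 1 + 1)
  omega

lemma period3 (hm : 6 ≤ m) {c : Fin m → ℕ} (hd : IsDynamic (SimpleGraph.cycleGraph m) c)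
    (hlt : ∀ v, c v < 3) (u : Fin m) : c (u + 1 + 1 + 1) = c u := by
  obtain ⟨a1, a2, a3⟩ := triple hm hd u
  obtain ⟨b1, b2, b3⟩ := triple hm hd (u + 1)
  have := hlt u
  have := hlt (u + 1)
  have := hlt (u + 1 + 1)
  have := hlt (u + 1 + 1 + 1)
  omega

open Fin.NatCast in
lemma lb4 (hm : 6 ≤ m) (hm3 : m % 3 ≠ 0) {c : Fin m → ℕ}
    (hd : IsDynamic (SimpleGraph.cycleGraph m) c) (hlt : ∀ v, c v < 3) : False := by
  have key : ∀ k : ℕ, c ((3 * k : ℕ) : Fin m) = c 0 := by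
    intro k
    induction k with
    | zero => norm_num
    | succ k ih =>
      have hcast : ((3 * (k + 1) : ℕ) : Fin m) = ((3 * k : ℕ) : Fin m) + 1 + 1 + 1 := by
        apply Fin.ext
        simp only [Fin.val_natCast, Fin.val_add, my_val_one (by omega : 2 ≤ m), Nat.add_mod_mod, Nat.mod_add_mod]
        ring_nf
      rw [hcast, period3 hm hd hlt, ih]
  have hco : Nat.Coprime 3 m := by
    rw [Nat.Prime.coprime_iff_not_dvd Nat.prime_three]
    omega
  obtain ⟨k, -, hk⟩ := Nat.exists_mul_mod_eq_one_of_coprime hco (by omega)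
  have h1 : ((3 * k : ℕ) : Fin m) = (1 : Fin m) := by
    apply Fin.ext
    rw [Fin.val_natCast, hk, my_val_one (by omega)]
  have hc01 : c 1 = c 0 := by rw [← h1]; exact key k
  have hadj : (SimpleGraph.cycleGraph m).Adj 0 1 :=
    (adj_iff (by omega)).mpr (Or.inr (by rw [zero_add]))
  exact hd.1 0 1 hadj hc01.symm

/-- the block pattern coloring -/
def pat (m r x : ℕ) : ℕ := if x < m - r then x % 3 else (x - (m - r)) % 4

lemma pat_ne2 (m r x y z : ℕ) (hm : 6 ≤ m)
    (hr : r = 0 ∧ m % 3 = 0 ∨ r = 4 ∧ m % 3 = 1 ∨ r = 8 ∧ m % 3 = 2)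
    (hx : x < m) (hy' : y < m)
    (hy : y = x + 1 ∨ (x + 1 = m ∧ y = 0)) (hz : z = y + 1 ∨ (y + 1 = m ∧ z = 0)) :
    pat m r x ≠ pat m r y ∧ pat m r x ≠ pat m r z := by
  unfold pat
  split_ifs <;> omega

lemma pat_lt (m r x : ℕ) (hm : 6 ≤ m)
    (hr : r = 0 ∧ m % 3 = 0 ∨ r = 4 ∧ m % 3 = 1 ∨ r = 8 ∧ m % 3 = 2)
    (hx : x < m) : pat m r x < if m % 3 = 0 then 3 else 4 := by
  unfold pat
  split_ifs <;> omega

lemma ub (hm : 6 ≤ m) :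
    ∃ c : Fin m → ℕ, (∀ v, c v < if m % 3 = 0 then 3 else 4) ∧
      IsDynamic (SimpleGraph.cycleGraph m) c := by
  set r : ℕ := if m % 3 = 0 then 0 else if m % 3 = 1 then 4 else 8 with hrdef
  have hr : r = 0 ∧ m % 3 = 0 ∨ r = 4 ∧ m % 3 = 1 ∨ r = 8 ∧ m % 3 = 2 := by
    have h3 : m % 3 = 0 ∨ m % 3 = 1 ∨ m % 3 = 2 := by omega
    rcases h3 with h | h | h <;> simp [hrdef, h]
  refine ⟨fun v => pat m r v.val, ?_, ?_, ?_⟩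
  · intro v; exact pat_lt m r v.val hm hr v.isLt
  · -- proper
    intro u v hadj
    have step : ∀ w : Fin m, pat m r w.val ≠ pat m r (w + 1).val := by
      intro w
      have hs := my_val_succ (by omega) w
      exact (pat_ne2 m r w.val (w + 1).val (w + 1 + 1).val hm hr w.isLt (w + 1).isLt
        (by tauto) (by
          rcases my_val_succ (by omega) (w + 1) with h | h
          · exact Or.inl h
          · exact Or.inr h)).1
    rcases (adj_iff (by omega)).mp hadj with h | h
    · rw [h]; exact (step v).symm
    · rw [h]; exact step u
  · -- dynamic
    intro v _
    refine ⟨v - 1, v + 1, ?_, ?_, ?_⟩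
    · exact (adj_iff (by omega)).mpr (Or.inl (by rw [sub_add_cancel]))
    · exact (adj_iff (by omega)).mpr (Or.inr rfl)
    · have h := (pat_ne2 m r (v - 1).val (v - 1 + 1).val (v - 1 + 1 + 1).val hm hr
        (v - 1).isLt (v - 1 + 1).isLt
        (by rcases my_val_succ (by omega) (v - 1) with h | h
            · exact Or.inl h
            · exact Or.inr h)
        (by rcases my_val_succ (by omega) (v - 1 + 1) with h | h
            · exact Or.inl h
            · exact Or.inr h)).2
      rw [sub_add_cancel] at h
      exact h

end Aux

theorem dynChrom_cycleGraph_even (n : ℕ) (hn : 3 ≤ n) :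
    dynChrom (SimpleGraph.cycleGraph (2 * n)) =
      if n % 3 = 0 then 3 else 4 := by
  haveI : NeZero (2 * n) := ⟨by omega⟩
  have hm : 6 ≤ 2 * n := by omega
  have hmod : (if n % 3 = 0 then (3:ℕ) else 4) = if (2 * n) % 3 = 0 then 3 else 4 := by
    have h3 : n % 3 = 0 ∨ n % 3 = 1 ∨ n % 3 = 2 := by omega
    rcases h3 with h | h | h <;> simp [Nat.mul_mod, h]
  rw [hmod]
  obtain ⟨c, hlt, hdyn⟩ := ub hm
  unfold dynChrom
  apply le_antisymm
  · exact Nat.sInf_le ⟨c, hlt, hdyn⟩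
  · have hmem : (if (2 * n) % 3 = 0 then (3:ℕ) else 4) ∈
        {k | ∃ c : Fin (2 * n) → ℕ, (∀ v, c v < k) ∧
          IsDynamic (SimpleGraph.cycleGraph (2 * n)) c} := ⟨c, hlt, hdyn⟩
    apply le_csInf ⟨_, hmem⟩
    rintro k ⟨c', hlt', hd'⟩
    have h3 : 3 ≤ k := lb3 hm hd' hlt'
    split_ifs with h
    · exact h3
    · by_contra hk
      have : ∀ v, c' v < 3 := fun v => by have := hlt' v; omega
      exact lb4 hm h hd' this
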